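/- Let G be a group and x ∈ G an element such that some power x^{e₁} has exactly k conjugates in G for a positive integer e₁. Then there exists a positive integer e such that x^e is contained in a torsion-free abelian normal subgroup of G all of whose elements have finitely many conjugates in G. -/

import Mathlib

open Subgroup MulAction

section Aux

variable {G : Type*} [Group G]

/-- The centralizer of the conjugacy class (orbit under conjugation) of `y` is normal. -/
theorem aux_centralizer_orbit_normal (y : G) :
    (Subgroup.centralizer (MulAction.orbit (ConjAct G) y : Set G)).Normal := by
  set S : Set G := MulAction.orbit (ConjAct G) y with hSdef
  have hSconj : ∀ s ∈ S, ∀ g : G, g * s * g⁻¹ ∈ S := by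
    intro s hs g
    obtain ⟨c, rfl⟩ := hs
    refine ⟨ConjAct.toConjAct g * c, ?_⟩
    show (ConjAct.toConjAct g * c) • y = g * (c • y) * g⁻¹
    rw [mul_smul, ConjAct.toConjAct_smul]
  constructor
  intro n hn g
  rw [Subgroup.mem_centralizer_iff] at hn ⊢
  intro s hs
  have h1 := hn (g⁻¹ * s * g) (by simpa using hSconj s hs g⁻¹)
  have h2 : g * (g⁻¹ * s * g * n) * g⁻¹ = g * (n * (g⁻¹ * s * g)) * g⁻¹ := by rw [h1]
  simpa [mul_assoc] using h2

end Aux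

/-- If some power `x ^ e₁` of `x` has exactly `k` conjugates in `G`, then some power
`x ^ e` lies in a torsion-free abelian normal subgroup of `G` all of whose elements
have finitely many conjugates in `G`. -/
theorem stmt5 {G : Type*} [Group G] (x : G) (e₁ k : ℕ) (he₁ : 0 < e₁)
    (hk : (Subgroup.centralizer {x ^ e₁}).index = k) (hkpos : 0 < k) :
    ∃ e : ℕ, 0 < e ∧ ∃ N : Subgroup G, N.Normal ∧ x ^ e ∈ N ∧
      (∀ g : ↥N, g ≠ 1 → ¬IsOfFinOrder g) ∧ (∀ a ∈ N, ∀ b ∈ N, Commute a b) ∧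
      ∀ g ∈ N, (Subgroup.centralizer {g}).FiniteIndex := by
  classical
  set y := x ^ e₁ with hy
  set S : Set G := MulAction.orbit (ConjAct G) y with hSdef
  have hSconj : ∀ s ∈ S, ∀ g : G, g * s * g⁻¹ ∈ S := by
    intro s hs g
    obtain ⟨c, rfl⟩ := hs
    refine ⟨ConjAct.toConjAct g * c, ?_⟩
    show (ConjAct.toConjAct g * c) • y = g * (c • y) * g⁻¹
    rw [mul_smul, ConjAct.toConjAct_smul]
  -- every element of the conjugacy class has centralizer of index k
  have hidx : ∀ s ∈ S, (Subgroup.centralizer {s}).index = k := by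
    have hGen : ∀ s : G, (Subgroup.centralizer {s}).index
        = (MulAction.orbit (ConjAct G) s).ncard := by
      intro s
      rw [Subgroup.centralizer_eq_comap_stabilizer]
      exact (Subgroup.index_comap_of_surjective _ ConjAct.toConjAct.surjective).trans
        (MulAction.index_stabilizer _ _)
    intro s hs
    rw [hGen s, MulAction.orbit_eq_iff.mpr hs, ← hGen y, hk]
  have hSncard : S.ncard = k := by
    have := hidx y (MulAction.mem_orbit_self y)
    have hGen : (Subgroup.centralizer {y}).index = S.ncard := by
      rw [Subgroup.centralizer_eq_comap_stabilizer]
      exact (Subgroup.index_comap_of_surjective _ ConjAct.toConjAct.surjective).trans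
        (MulAction.index_stabilizer _ _)
    rw [← hGen, this]
  have hSfin : S.Finite := Set.finite_of_ncard_ne_zero (by rw [hSncard]; exact hkpos.ne')
  haveI : Finite ↥S := hSfin.to_subtype
  -- K : centralizer of the conjugacy class, normal and of finite index
  set K : Subgroup G := Subgroup.centralizer S with hKdef
  haveI hKnormal : K.Normal := aux_centralizer_orbit_normal y
  have hKiInf : K = ⨅ s : S, Subgroup.centralizer {(s : G)} := by
    ext g
    simp only [Subgroup.mem_iInf, Subgroup.mem_centralizer_iff, Set.mem_singleton_iff,
      forall_eq, hKdef]
    exact ⟨fun h s => h s s.2, fun h s hs => h ⟨s, hs⟩⟩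
  haveI hKfin : K.FiniteIndex := by
    rw [hKiInf]
    exact Subgroup.finiteIndex_iInf fun s => ⟨by rw [hidx s s.2]; exact hkpos.ne'⟩
  -- L : subgroup generated by the conjugacy class, normal and finitely generated
  set L : Subgroup G := Subgroup.closure S with hLdef
  have hyL : y ∈ L := Subgroup.subset_closure (MulAction.mem_orbit_self y)
  haveI hLnormal : L.Normal := by
    constructor
    intro n hn g
    induction hn using Subgroup.closure_induction with
    | mem s hs => exact Subgroup.subset_closure (hSconj s hs g)
    | one => simpa using one_mem L
    | mul a b ha hb iha ihb =>
        have : g * (a * b) * g⁻¹ = (g * a * g⁻¹) * (g * b * g⁻¹) := by group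
        rw [this]; exact mul_mem iha ihb
    | inv a ha iha =>
        have : g * a⁻¹ * g⁻¹ = (g * a * g⁻¹)⁻¹ := by group
        rw [this]; exact inv_mem iha
  -- elements of K commute with elements of L
  have hKL : ∀ a ∈ K, ∀ b ∈ L, a * b = b * a := by
    intro a ha b hb
    rw [Subgroup.mem_centralizer_iff] at ha
    have hle : L ≤ Subgroup.centralizer {a} := by
      rw [hLdef]
      refine (Subgroup.closure_le _).mpr fun s hs => ?_
      rw [SetLike.mem_coe, Subgroup.mem_centralizer_iff]
      intro h hh
      rw [Set.mem_singleton_iff] at hh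
      subst hh
      exact (ha s hs).symm
    have := hle hb
    rw [Subgroup.mem_centralizer_iff] at this
    exact this a rfl
  -- A = K ⊓ L : abelian normal subgroup
  haveI hAnormal : (K ⊓ L).Normal :=
    ⟨fun n hn g => ⟨hKnormal.conj_mem n hn.1 g, hLnormal.conj_mem n hn.2 g⟩⟩
  letI : CommGroup ↥(K ⊓ L) :=
    { (inferInstance : Group ↥(K ⊓ L)) with
      mul_comm := fun a b => Subtype.ext (hKL a a.2.1 b b.2.2) }
  -- finite generation
  have hLfg : L.FG := ⟨hSfin.toFinset, by rw [Set.Finite.coe_toFinset]⟩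
  haveI : Group.FG ↥L := (Group.fg_iff_subgroup_fg L).mpr hLfg
  haveI : (K.subgroupOf L).FiniteIndex := Subgroup.instFiniteIndex_subgroupOf K L
  haveI : Group.FG ↥(K.subgroupOf L) := Subgroup.fg_of_index_ne_zero _
  have hALsub : (K ⊓ L).subgroupOf L = K.subgroupOf L := Subgroup.inf_subgroupOf_right K L
  haveI : Group.FG ↥((K ⊓ L).subgroupOf L) := by rw [hALsub]; infer_instance
  haveI hAfg : Group.FG ↥(K ⊓ L) :=
    Group.fg_of_surjective
      (f := (Subgroup.subgroupOfEquivOfLe (inf_le_right : K ⊓ L ≤ L)).toMonoidHom)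
      (Subgroup.subgroupOfEquivOfLe (inf_le_right : K ⊓ L ≤ L)).surjective
  -- y ^ m ∈ K ⊓ L where m is the index of K ⊓ L in L
  set m : ℕ := (K.subgroupOf L).index with hmdef
  have hm : m ≠ 0 := Subgroup.FiniteIndex.index_ne_zero
  have hymK : y ^ m ∈ K := by
    have h := Subgroup.pow_index_mem (K.subgroupOf L) (⟨y, hyL⟩ : ↥L)
    rwa [Subgroup.mem_subgroupOf] at h
  have hym : y ^ m ∈ K ⊓ L := ⟨hymK, pow_mem hyL m⟩
  -- the torsion subgroup of K ⊓ L is finite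
  set T := CommGroup.torsion ↥(K ⊓ L) with hTdef
  haveI : AddGroup.FG (Additive ↥(K ⊓ L)) := GroupFG.iff_add_fg.mp hAfg
  haveI : Module.Finite ℤ (Additive ↥(K ⊓ L)) := Module.Finite.iff_addGroup_fg.mpr ‹_›
  haveI : IsNoetherian ℤ (Additive ↥(K ⊓ L)) :=
    isNoetherian_of_isNoetherianRing_of_finite ℤ _
  set S' : Submodule ℤ (Additive ↥(K ⊓ L)) :=
    AddSubgroup.toIntSubmodule (Subgroup.toAddSubgroup T) with hS'def
  have hfg : S'.FG := IsNoetherian.noetherian S'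
  haveI : Module.Finite ℤ ↥S' := Module.Finite.iff_fg.mpr hfg
  have hS'fin : Finite ↥S' := by
    refine Module.finite_of_fg_torsion ↥S' fun a => ?_
    have haT : Additive.toMul (a : Additive ↥(K ⊓ L)) ∈ T := a.2
    obtain ⟨n, hn, hpow⟩ := isOfFinOrder_iff_pow_eq_one.mp haT
    refine ⟨⟨(n : ℤ), mem_nonZeroDivisors_of_ne_zero (by exact_mod_cast hn.ne')⟩, ?_⟩
    apply Subtype.ext
    show (n : ℤ) • (a : Additive ↥(K ⊓ L)) = 0
    have : Additive.toMul (a : Additive ↥(K ⊓ L)) ^ (n : ℤ) = 1 := by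
      rw [zpow_natCast, hpow]
    exact this
  have hTfin : Finite ↥T :=
    Finite.of_equiv ↥S'
      ⟨fun a => ⟨Additive.toMul a.1, a.2⟩, fun a => ⟨Additive.ofMul a.1, a.2⟩,
        fun _ => rfl, fun _ => rfl⟩
  haveI := hTfin
  set t : ℕ := Monoid.exponent ↥T with htdef
  have ht : t ≠ 0 := Monoid.exponent_ne_zero_of_finite
  -- the subgroup of t-th powers of K ⊓ L
  set ψ : ↥(K ⊓ L) →* G := (K ⊓ L).subtype.comp (powMonoidHom t) with hψdef
  have hψ : ∀ a : ↥(K ⊓ L), ψ a = (a : G) ^ t := fun a => rfl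
  set N : Subgroup G := ψ.range with hNdef
  have hNle : N ≤ K ⊓ L := by
    rintro g ⟨a, rfl⟩
    rw [hψ]
    exact pow_mem a.2 t
  refine ⟨e₁ * (m * t), ?_, N, ?_, ?_, ?_, ?_, ?_⟩
  · exact Nat.mul_pos he₁ (Nat.mul_pos (Nat.pos_of_ne_zero hm) (Nat.pos_of_ne_zero ht))
  · -- N is normal
    constructor
    rintro n ⟨a, rfl⟩ g
    refine ⟨⟨g * (a : G) * g⁻¹, hAnormal.conj_mem _ a.2 g⟩, ?_⟩
    rw [hψ, hψ]
    exact conj_pow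
  · -- x ^ e ∈ N
    refine ⟨⟨y ^ m, hym⟩, ?_⟩
    rw [hψ]
    show ((y : G) ^ m) ^ t = x ^ (e₁ * (m * t))
    rw [hy, ← pow_mul, ← pow_mul]
  · -- torsion-free
    intro g hg1 hfin
    obtain ⟨j, hj, hgj⟩ := isOfFinOrder_iff_pow_eq_one.mp hfin
    obtain ⟨a, ha⟩ := g.2
    have hgG : (g : G) ^ j = 1 := by
      have := congrArg (Subtype.val) hgj
      simpa using this
    have haG : (a : G) ^ (t * j) = 1 := by
      rw [pow_mul]
      rw [hψ] at ha
      rw [ha, hgG]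
    have haA : a ^ (t * j) = 1 := by
      apply Subtype.ext
      simpa using haG
    have haT : a ∈ T :=
      isOfFinOrder_iff_pow_eq_one.mpr
        ⟨t * j, Nat.mul_pos (Nat.pos_of_ne_zero ht) hj, haA⟩
    have hat : a ^ t = 1 := by
      have h := Monoid.pow_exponent_eq_one (⟨a, haT⟩ : ↥T)
      have h' := congrArg (Subtype.val) h
      simpa using h'
    apply hg1
    apply Subtype.ext
    rw [← ha, hψ]
    have := congrArg (Subgroup.subtype (K ⊓ L)) hat
    simpa using this
  · -- abelian
    intro a ha b hb
    exact hKL a (hNle ha).1 b (hNle hb).2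
  · -- finite conjugacy classes
    intro g hg
    have hgL : g ∈ L := (hNle hg).2
    have hle : K ≤ Subgroup.centralizer {g} := by
      intro a ha
      rw [Subgroup.mem_centralizer_iff]
      intro h hh
      rw [Set.mem_singleton_iff] at hh
      rw [hh]
      exact (hKL a ha g hgL).symm
    exact Subgroup.finiteIndex_of_le hle
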